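/- In the multiplication algebra of an admissible Poisson algebra, the left and right translation operators satisfy: L_x ∘ R_x = R_x ∘ L_x, 4L_{x·x} = 3L_x² - R_x² + 2R_x∘L_x, and 4R_{x·x} = 3R_x² - L_x² + 2R_x∘L_x, for every element x. -/
import Mathlib


variable {K : Type*} [Field K] {P : Type*} [AddCommGroup P] [Module K P]

/-- The associator of a bilinear multiplication. -/
def assocOf (m : P →ₗ[K] P →ₗ[K] P) (X Y Z : P) : P := m (m X Y) Z - m X (m Y Z)

/-- Admissible Poisson algebra condition:
`3 A(X,Y,Z) = (X·Z)·Y + (Y·Z)·X - (Y·X)·Z - (Z·X)·Y`. -/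
def IsAdmissible (m : P →ₗ[K] P →ₗ[K] P) : Prop :=
  ∀ X Y Z : P, (3 : ℤ) • assocOf m X Y Z =
    m (m X Z) Y + m (m Y Z) X - m (m Y X) Z - m (m Z X) Y

/-- The antisymmetrized bracket `{X,Y} = (X·Y - Y·X)/2`. -/
def brOf (m : P →ₗ[K] P →ₗ[K] P) (X Y : P) : P := (2 : K)⁻¹ • (m X Y - m Y X)

/-- The symmetrized product `X∙Y = (X·Y + Y·X)/2`. -/
def bulOf (m : P →ₗ[K] P →ₗ[K] P) (X Y : P) : P := (2 : K)⁻¹ • (m X Y + m Y X)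

/-- identities among left and right translation operators in an
admissible Poisson algebra: `L_x R_x = R_x L_x`, `4 L_{x²} = 3 L_x² - R_x² + 2 R_x L_x`,
`4 R_{x²} = 3 R_x² - L_x² + 2 R_x L_x`. -/
theorem stmt13 (h2 : (2 : K) ≠ 0) (h3 : (3 : K) ≠ 0)
    (m : P →ₗ[K] P →ₗ[K] P) (hm : IsAdmissible m) :
    ∀ x y : P,
      m x (m y x) = m (m x y) x ∧
      (4 : ℤ) • m (m x x) y =
        (3 : ℤ) • m x (m x y) - m (m y x) x + (2 : ℤ) • m (m x y) x ∧
      (4 : ℤ) • m y (m x x) =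
        (3 : ℤ) • m (m y x) x - m x (m x y) + (2 : ℤ) • m (m x y) x := by

  intro x y
  have E1 := hm x y x
  have E2 := hm x x y
  have E3 := hm y x x
  simp only [assocOf] at E1 E2 E3
  have key : ∀ v : P, (3 : ℤ) • v = 0 → v = 0 := by
    intro v hv
    have h' : ((3 : ℤ) : K) • v = 0 := by rw [Int.cast_smul_eq_zsmul]; exact hv
    rcases smul_eq_zero.mp h' with h | h
    · exact absurd (by exact_mod_cast h) h3
    · exact h
  refine ⟨?_, ?_, ?_⟩
  · have hz : (3 : ℤ) • (m (m x y) x - m x (m y x)) = 0 := by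
      rw [E1]; abel
    have := key _ hz
    rw [sub_eq_zero] at this
    exact this.symm
  · have hz : (4 : ℤ) • m (m x x) y -
        ((3 : ℤ) • m x (m x y) - m (m y x) x + (2 : ℤ) • m (m x y) x)
        = (3 : ℤ) • (m (m x x) y - m x (m x y)) -
          (m (m x y) x + m (m x y) x - m (m x x) y - m (m y x) x) := by
      abel
    rw [E2, sub_self] at hz
    exact sub_eq_zero.mp hz
  · have hz : (3 : ℤ) • ((4 : ℤ) • m y (m x x) -
        ((3 : ℤ) • m (m y x) x - m x (m x y) + (2 : ℤ) • m (m x y) x))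
        = -((3 : ℤ) • (m (m x x) y - m x (m x y)) -
            (m (m x y) x + m (m x y) x - m (m x x) y - m (m y x) x))
          - (4 : ℤ) • ((3 : ℤ) • (m (m y x) x - m y (m x x)) -
            (m (m y x) x + m (m x x) y - m (m x y) x - m (m x y) x)) := by
      abel
    rw [E2, E3] at hz
    simp only [sub_self, neg_zero, smul_zero, sub_zero] at hz
    exact sub_eq_zero.mp (key _ hz)
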